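/- Let q = r^2 where r is an odd prime power, let g be a primitive element of F_q^*, set γ = g^{(r−1)/2} and ξ = γ^{r−1}. Let s ≥ 1 be an integer and let i be an integer with 0 ≤ i ≤ s − 1. Define u = ∏_{0 ≤ l ≤ s−1, l ≠ i} (ξ^{2i+1} − ξ^{2l+1}) ∈ F_q. Then u^r = (−1)^{s−1} · ξ^{−((s−2)(2i+1) + s^2)} · u. -/

import Mathlib

open Finset

private lemma aux_inv_sub (F : Type*) [Field F] (a b : F) (ha : a ≠ 0) (hb : b ≠ 0) :
    a⁻¹ - b⁻¹ = -1 * ((a * b)⁻¹ * (a - b)) := by field_simp; ring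

private lemma aux_prod_pow (F : Type*) [Field F] (x : F) (hx : x ≠ 0)
    (r : ℕ) (hfrob : ∀ a b : F, (a - b) ^ r = a ^ r - b ^ r) (hxr : x ^ r = x⁻¹)
    (s : ℕ) (hs : 1 ≤ s) (i : ℕ) (hi : i ≤ s - 1) :
    (∏ l ∈ (Finset.range s).erase i, (x ^ (2 * i + 1) - x ^ (2 * l + 1))) ^ r =
      (-1 : F) ^ (s - 1) *
        x ^ (-(((s : ℤ) - 2) * (2 * (i : ℤ) + 1) + (s : ℤ) ^ 2)) *
        ∏ l ∈ (Finset.range s).erase i, (x ^ (2 * i + 1) - x ^ (2 * l + 1)) := by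
  have him : i ∈ Finset.range s := Finset.mem_range.mpr (by omega)
  have hcarde : ((Finset.range s).erase i).card = s - 1 := by
    rw [Finset.card_erase_of_mem him, Finset.card_range]
  have step1 : (∏ l ∈ (Finset.range s).erase i, (x ^ (2 * i + 1) - x ^ (2 * l + 1))) ^ r
      = ∏ l ∈ (Finset.range s).erase i, ((x⁻¹) ^ (2 * i + 1) - (x⁻¹) ^ (2 * l + 1)) := by
    rw [← Finset.prod_pow]
    refine Finset.prod_congr rfl fun l _ => ?_
    rw [hfrob, ← pow_mul x, ← pow_mul x, mul_comm (2 * i + 1) r, mul_comm (2 * l + 1) r,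
      pow_mul x, pow_mul x, hxr]
  have step2 : ∀ l, (x⁻¹) ^ (2 * i + 1) - (x⁻¹) ^ (2 * l + 1)
      = -1 * ((x ^ (2 * i + 2 * l + 2))⁻¹ * (x ^ (2 * i + 1) - x ^ (2 * l + 1))) := by
    intro l
    have hab : x ^ (2 * i + 2 * l + 2) = x ^ (2 * i + 1) * x ^ (2 * l + 1) := by
      rw [← pow_add]; congr 1; omega
    rw [inv_pow, inv_pow, hab]
    exact aux_inv_sub F _ _ (pow_ne_zero _ hx) (pow_ne_zero _ hx)
  have hT : ∑ l ∈ Finset.range s, ((l : ℤ) * 2) = (s : ℤ) * ((s : ℤ) - 1) := by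
    have h := Finset.sum_range_id_mul_two s
    zify [hs] at h
    rw [Finset.sum_mul] at h
    exact h
  have hN : ((∑ l ∈ (Finset.range s).erase i, (2 * i + 2 * l + 2) : ℕ) : ℤ)
      = ((s : ℤ) - 2) * (2 * (i : ℤ) + 1) + (s : ℤ) ^ 2 := by
    push_cast
    rw [Finset.sum_erase_eq_sub him]
    have hsplit : ∑ l ∈ Finset.range s, (2 * (i : ℤ) + 2 * (l : ℤ) + 2)
        = (s : ℤ) * (2 * (i : ℤ) + 2) + ∑ l ∈ Finset.range s, ((l : ℤ) * 2) := by
      have hterm : ∀ l : ℕ, 2 * (i : ℤ) + 2 * (l : ℤ) + 2 = (2 * (i : ℤ) + 2) + (l : ℤ) * 2 := by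
        intro l; ring
      simp_rw [hterm]
      rw [Finset.sum_add_distrib, Finset.sum_const, Finset.card_range, nsmul_eq_mul]
    rw [hsplit, hT]
    ring
  calc (∏ l ∈ (Finset.range s).erase i, (x ^ (2 * i + 1) - x ^ (2 * l + 1))) ^ r
      = ∏ l ∈ (Finset.range s).erase i, ((x⁻¹) ^ (2 * i + 1) - (x⁻¹) ^ (2 * l + 1)) := step1
    _ = ∏ l ∈ (Finset.range s).erase i,
        (-1 * ((x ^ (2 * i + 2 * l + 2))⁻¹ * (x ^ (2 * i + 1) - x ^ (2 * l + 1)))) :=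
        Finset.prod_congr rfl fun l _ => step2 l
    _ = (-1 : F) ^ (s - 1) *
        ((∏ l ∈ (Finset.range s).erase i, x ^ (2 * i + 2 * l + 2))⁻¹ *
          ∏ l ∈ (Finset.range s).erase i, (x ^ (2 * i + 1) - x ^ (2 * l + 1))) := by
        rw [Finset.prod_mul_distrib, Finset.prod_mul_distrib, Finset.prod_const, hcarde,
          ← Finset.prod_inv_distrib]
    _ = (-1 : F) ^ (s - 1) *
        x ^ (-(((s : ℤ) - 2) * (2 * (i : ℤ) + 1) + (s : ℤ) ^ 2)) *
          ∏ l ∈ (Finset.range s).erase i, (x ^ (2 * i + 1) - x ^ (2 * l + 1)) := by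
        rw [Finset.prod_pow_eq_pow_sum, ← hN, zpow_neg, zpow_natCast, mul_assoc]

/-- Let `q = r²` with `r` an odd prime power, `g` a primitive element of
`F^*`, `γ = g^{(r-1)/2}` and `ξ = γ^{r-1}`.  For an integer `s ≥ 1` and `0 ≤ i ≤ s - 1`,
the element `u = ∏_{0 ≤ l ≤ s-1, l ≠ i} (ξ^{2i+1} - ξ^{2l+1})` satisfies
`u^r = (-1)^{s-1} · ξ^{-((s-2)(2i+1) + s²)} · u`. -/
theorem pow_r_of_prod_xi_odd_sub (F : Type*) [Field F] [Fintype F]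
    (r : ℕ) (hr : IsPrimePow r) (hrodd : Odd r) (hcard : Fintype.card F = r ^ 2)
    (g : F) (hg : orderOf g = Fintype.card F - 1)
    (s : ℕ) (hs : 1 ≤ s) (i : ℕ) (hi : i ≤ s - 1) :
    (∏ l ∈ (Finset.range s).erase i,
        (((g ^ ((r - 1) / 2)) ^ (r - 1)) ^ (2 * i + 1) -
          ((g ^ ((r - 1) / 2)) ^ (r - 1)) ^ (2 * l + 1))) ^ r =
      (-1 : F) ^ (s - 1) *
        ((g ^ ((r - 1) / 2)) ^ (r - 1)) ^
          (-(((s : ℤ) - 2) * (2 * (i : ℤ) + 1) + (s : ℤ) ^ 2)) *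
        ∏ l ∈ (Finset.range s).erase i,
          (((g ^ ((r - 1) / 2)) ^ (r - 1)) ^ (2 * i + 1) -
            ((g ^ ((r - 1) / 2)) ^ (r - 1)) ^ (2 * l + 1)) := by
  obtain ⟨p, k, hp, hk, hpk⟩ := hr
  haveI : Fact p.Prime := ⟨hp.nat_prime⟩
  have hr1 : 1 < r := by
    rcases hrodd with ⟨m, hm⟩
    rcases Nat.eq_zero_or_pos m with h0 | h0
    · exact absurd (by omega : r = 1) (IsPrimePow.one_lt ⟨p, k, hp, hk, hpk⟩).ne'
    · omega
  have hcard' : Fintype.card F = p ^ (2 * k) := by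
    rw [hcard, ← hpk, ← pow_mul, mul_comm]
  haveI : CharP F p := by
    obtain ⟨c, hc⟩ := CharP.exists F
    haveI := hc
    have hcprime : c.Prime := CharP.char_is_prime F c
    obtain ⟨n, hn1, hn2⟩ := FiniteField.card F c
    have hcp : c = p := by
      have hdvd : c ∣ p ^ (2 * k) := by
        rw [← hcard', hn2]
        exact dvd_pow_self c n.ne_zero
      exact (Nat.prime_dvd_prime_iff_eq hcprime hp.nat_prime).mp
        (hcprime.dvd_of_dvd_pow hdvd)
    rwa [hcp] at hc
  have hfrob : ∀ a b : F, (a - b) ^ r = a ^ r - b ^ r := by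
    intro a b
    rw [← hpk]
    exact sub_pow_char_pow a b k
  have hfin : IsOfFinOrder g := by
    rw [← orderOf_pos_iff, hg, hcard]
    exact Nat.sub_pos_of_lt (by nlinarith)
  have hgne : g ≠ 0 := hfin.isUnit.ne_zero
  have hξne : ((g ^ ((r - 1) / 2)) ^ (r - 1) : F) ≠ 0 :=
    pow_ne_zero _ (pow_ne_zero _ hgne)
  have hgpow : g ^ (r ^ 2 - 1) = 1 := by
    rw [← hcard, ← hg]; exact pow_orderOf_eq_one g
  have hsq : r ^ 2 - 1 = (r - 1) * (r + 1) := by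
    zify [hr1.le, (show 1 ≤ r ^ 2 by nlinarith)]
    ring
  have hξr1 : (((g ^ ((r - 1) / 2)) ^ (r - 1)) : F) ^ (r + 1) = 1 := by
    rw [← pow_mul, ← pow_mul]
    have he : (r - 1) / 2 * ((r - 1) * (r + 1)) = (r ^ 2 - 1) * ((r - 1) / 2) := by
      rw [hsq]; ring
    rw [he, pow_mul, hgpow, one_pow]
  have hξr : (((g ^ ((r - 1) / 2)) ^ (r - 1)) : F) ^ r
      = (((g ^ ((r - 1) / 2)) ^ (r - 1)) : F)⁻¹ := by
    rw [pow_succ] at hξr1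
    field_simp
    linear_combination hξr1
  exact aux_prod_pow F _ hξne r hfrob hξr s hs i hi
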